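/- arXiv:math/9909199 — 4 statements merged into one kernel-verified Lean document; each statement's English description precedes it below -/
import Mathlib

section
/- Suppose λ ∈ ℝ^n satisfies S_k(λ + η) ≥ 0 for every vector η ∈ ℝ^n with all coordinates η_i ≥ 0. Then S_j(λ) ≥ 0 for every j = 1, ..., k. -/
/-- The `k`-th elementary symmetric polynomial of `l : Fin n → ℝ`. -/
noncomputable def esymmS (n k : ℕ) (l : Fin n → ℝ) : ℝ :=
  ∑ A ∈ Finset.powersetCard k (Finset.univ : Finset (Fin n)), ∏ i ∈ A, l i

noncomputable def TiS (n m : ℕ) (l : Fin n → ℝ) (i : Fin n) : ℝ :=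
  ∑ A ∈ (Finset.powersetCard m (Finset.univ : Finset (Fin n))).filter (fun A => i ∈ A),
    ∏ j ∈ A.erase i, l j

lemma esymm_shift (n m : ℕ) (l : Fin n → ℝ) (i : Fin n) (t : ℝ) :
    esymmS n m (l + fun j => if j = i then t else 0)
      = esymmS n m l + t * TiS n m l i := by
  classical
  unfold esymmS TiS
  rw [← Finset.sum_filter_add_sum_filter_not (Finset.powersetCard m Finset.univ)
    (fun A => i ∈ A) (fun A => ∏ j ∈ A, (l + fun j => if j = i then t else 0) j),
    ← Finset.sum_filter_add_sum_filter_not (Finset.powersetCard m Finset.univ)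
    (fun A => i ∈ A) (fun A => ∏ j ∈ A, l j)]
  have h1 : ∀ A ∈ (Finset.powersetCard m (Finset.univ : Finset (Fin n))).filter
      (fun A => i ∈ A),
      ∏ j ∈ A, (l + fun j => if j = i then t else 0) j
        = (∏ j ∈ A, l j) + t * ∏ j ∈ A.erase i, l j := by
    intro A hA
    have hiA : i ∈ A := (Finset.mem_filter.mp hA).2
    rw [← Finset.prod_erase_mul A _ hiA, ← Finset.prod_erase_mul A l hiA]
    have : ∀ j ∈ A.erase i, (l + fun j => if j = i then t else 0) j = l j := by
      intro j hj
      have : j ≠ i := Finset.ne_of_mem_erase hj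
      simp [this]
    rw [Finset.prod_congr rfl this]
    simp [mul_add, mul_comm]
  have h2 : ∀ A ∈ (Finset.powersetCard m (Finset.univ : Finset (Fin n))).filter
      (fun A => ¬ i ∈ A),
      ∏ j ∈ A, (l + fun j => if j = i then t else 0) j = ∏ j ∈ A, l j := by
    intro A hA
    have hiA : i ∉ A := (Finset.mem_filter.mp hA).2
    refine Finset.prod_congr rfl fun j hj => ?_
    have : j ≠ i := fun hji => hiA (hji ▸ hj)
    simp [this]
  rw [Finset.sum_congr rfl h1, Finset.sum_congr rfl h2, Finset.sum_add_distrib,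
    ← Finset.mul_sum]
  ring

lemma TiS_nonneg (n m : ℕ) (l : Fin n → ℝ) (i : Fin n)
    (h : ∀ t : ℝ, 0 ≤ t → 0 ≤ esymmS n m (l + fun j => if j = i then t else 0)) :
    0 ≤ TiS n m l i := by
  by_contra hneg
  push_neg at hneg
  have hb : 0 ≤ esymmS n m l := by
    have := h 0 le_rfl
    rw [esymm_shift] at this
    simpa using this
  have ht : (0:ℝ) ≤ (esymmS n m l + 1) / (-TiS n m l i) := by
    apply div_nonneg (by linarith) (by linarith)
  have := h _ ht
  rw [esymm_shift] at this
  have hne : (-TiS n m l i) ≠ 0 := by linarith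
  have hcalc : (esymmS n m l + 1) / (-TiS n m l i) * TiS n m l i
      = -(esymmS n m l + 1) := by
    rw [div_mul_eq_mul_div, div_eq_iff hne]
    ring
  rw [hcalc] at this
  linarith

lemma sum_TiS (n m : ℕ) (hm : 1 ≤ m) (hmn : m ≤ n) (l : Fin n → ℝ) :
    ∑ i, TiS n m l i = ((n : ℝ) - m + 1) * esymmS n (m - 1) l := by
  classical
  unfold TiS esymmS
  rw [Finset.sum_sigma']
  have : ((n : ℝ) - m + 1) * ∑ A ∈ Finset.powersetCard (m-1) (Finset.univ : Finset (Fin n)),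
      ∏ i ∈ A, l i
      = ∑ B ∈ Finset.powersetCard (m-1) (Finset.univ : Finset (Fin n)),
          ∑ i ∈ Bᶜ, ∏ j ∈ B, l j := by
    rw [Finset.mul_sum]
    refine Finset.sum_congr rfl fun B hB => ?_
    rw [Finset.sum_const, nsmul_eq_mul]
    have hBcard : B.card = m - 1 := (Finset.mem_powersetCard.mp hB).2
    have : Bᶜ.card = n - (m - 1) := by
      rw [Finset.card_compl, hBcard, Fintype.card_fin]
    rw [this]
    congr 1
    have h1 : m - 1 ≤ n := le_trans (Nat.sub_le m 1) hmn
    push_cast [Nat.cast_sub h1, Nat.cast_sub hm]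
    ring
  rw [this, Finset.sum_sigma']
  refine Finset.sum_nbij' (fun p => ⟨p.2.erase p.1, p.1⟩) (fun p => ⟨p.2, insert p.2 p.1⟩)
    ?_ ?_ ?_ ?_ ?_
  · rintro ⟨i, A⟩ hp
    simp only [Finset.mem_sigma, Finset.mem_filter] at hp ⊢
    obtain ⟨-, hA, hiA⟩ := hp
    constructor
    · rw [Finset.mem_powersetCard]
      refine ⟨Finset.subset_univ _, ?_⟩
      rw [Finset.card_erase_of_mem hiA, (Finset.mem_powersetCard.mp hA).2]
    · simp [Finset.mem_compl]
  · rintro ⟨B, i⟩ hp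
    simp only [Finset.mem_sigma, Finset.mem_filter] at hp ⊢
    obtain ⟨hB, hi⟩ := hp
    have hiB : i ∉ B := by simpa [Finset.mem_compl] using hi
    refine ⟨Finset.mem_univ _, ?_, Finset.mem_insert_self _ _⟩
    rw [Finset.mem_powersetCard]
    refine ⟨Finset.subset_univ _, ?_⟩
    rw [Finset.card_insert_of_notMem hiB, (Finset.mem_powersetCard.mp hB).2]
    omega
  · rintro ⟨i, A⟩ hp
    simp only [Finset.mem_sigma, Finset.mem_filter] at hp
    obtain ⟨-, -, hiA⟩ := hp
    simp [Finset.insert_erase hiA]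
  · rintro ⟨B, i⟩ hp
    simp only [Finset.mem_sigma, Finset.mem_filter] at hp
    obtain ⟨-, hi⟩ := hp
    have hiB : i ∉ B := by simpa [Finset.mem_compl] using hi
    simp [Finset.erase_insert hiB]
  · rintro ⟨i, A⟩ hp
    rfl

/-- If S_k(λ+η) ≥ 0 for all η ≥ 0, then S_j(λ) ≥ 0 for j = 1,…,k. -/
theorem stmt3 (n k : ℕ) (hk1 : 1 ≤ k) (hkn : k ≤ n) (lam : Fin n → ℝ)
    (h : ∀ eta : Fin n → ℝ, (∀ i, 0 ≤ eta i) → 0 ≤ esymmS n k (lam + eta)) :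
    ∀ j, 1 ≤ j → j ≤ k → 0 ≤ esymmS n j lam := by
  have key : ∀ d : ℕ, d ≤ k - 1 → ∀ eta : Fin n → ℝ, (∀ i, 0 ≤ eta i) →
      0 ≤ esymmS n (k - d) (lam + eta) := by
    intro d
    induction d with
    | zero => intro _ eta heta; exact h eta heta
    | succ d ih =>
      intro hd eta heta
      have hd' : d ≤ k - 1 := le_trans (Nat.le_succ d) hd
      set m := k - d with hm
      have hm1 : 2 ≤ m := by omega
      have hmn : m ≤ n := by omega
      have hmsub : k - (d + 1) = m - 1 := by omega
      rw [hmsub]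
      set l := lam + eta with hl
      have hTi : ∀ i, 0 ≤ TiS n m l i := by
        intro i
        apply TiS_nonneg
        intro t ht
        have heq : l + (fun j => if j = i then t else 0)
            = lam + (eta + fun j => if j = i then t else 0) := by
          funext j; simp [hl, Pi.add_apply]; ring
        rw [heq]
        refine ih hd' _ (fun j => ?_)
        by_cases hji : j = i
        · subst hji; simpa using add_nonneg (heta j) ht
        · simpa [hji] using heta j
      have hsum : 0 ≤ ∑ i, TiS n m l i := Finset.sum_nonneg fun i _ => hTi i
      rw [sum_TiS n m (by omega) hmn l] at hsum
      have hpos : (0:ℝ) < (n : ℝ) - m + 1 := by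
        have : (m:ℝ) ≤ n := by exact_mod_cast hmn
        linarith
      nlinarith [hsum, hpos]
  intro j hj1 hjk
  have := key (k - j) (by omega) 0 (fun i => le_rfl)
  have hkj : k - (k - j) = j := by omega
  rw [hkj] at this
  simpa using this
end

section
/- For 1 ≤ k ≤ n, the set Γ_k = {λ ∈ ℝ^n : S_j(λ) ≥ 0, j = 1,...,k} equals the set {λ ∈ ℝ^n : S_k(λ + η) ≥ 0 for all η ∈ ℝ^n with η_i ≥ 0 for all i}. -/
open Finset Polynomial
set_option linter.unusedSectionVars false
set_option linter.unusedVariables false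
set_option maxHeartbeats 1000000

section Helpers

variable {ι : Type*} [DecidableEq ι]



variable {ι : Type*} [DecidableEq ι]

noncomputable def esF (A : Finset ι) (j : ℕ) (v : ι → ℝ) : ℝ :=
  ∑ B ∈ A.powersetCard j, ∏ i ∈ B, v i

lemma esF_zero (A : Finset ι) (v : ι → ℝ) : esF A 0 v = 1 := by
  simp [esF]

lemma esF_eq_zero (A : Finset ι) {j : ℕ} (h : A.card < j) (v : ι → ℝ) : esF A j v = 0 := by
  simp [esF, Finset.powersetCard_eq_empty.2 h]

lemma esF_congr {A : Finset ι} {v w : ι → ℝ} (h : ∀ x ∈ A, v x = w x) (j : ℕ) :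
    esF A j v = esF A j w := by
  unfold esF
  refine Finset.sum_congr rfl fun B hB => Finset.prod_congr rfl fun i hi => ?_
  exact h i ((Finset.mem_powersetCard.1 hB).1 hi)

lemma esF_multiset (A : Finset ι) (j : ℕ) (v : ι → ℝ) :
    esF A j v = (A.val.map v).esymm j := by
  rw [Finset.esymm_map_val]; rfl

lemma esF_erase {A : Finset ι} {i : ι} (hi : i ∈ A) (j : ℕ) (v : ι → ℝ) :
    esF A (j+1) v = esF (A.erase i) (j+1) v + v i * esF (A.erase i) j v := by
  unfold esF
  conv_lhs => rw [← Finset.insert_erase hi]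
  rw [Finset.powersetCard_succ_insert (Finset.notMem_erase i A), Finset.sum_union, Finset.sum_image, Finset.mul_sum]
  · congr 1
    refine Finset.sum_congr rfl fun B hB => ?_
    have hiB : i ∉ B := fun h => Finset.notMem_erase i A ((Finset.mem_powersetCard.1 hB).1 h)
    rw [Finset.prod_insert hiB]
  · intro B1 h1 B2 h2 he
    have h1' : i ∉ B1 := fun h => Finset.notMem_erase i A ((Finset.mem_powersetCard.1 h1).1 h)
    have h2' : i ∉ B2 := fun h => Finset.notMem_erase i A ((Finset.mem_powersetCard.1 h2).1 h)
    rw [← Finset.erase_insert h1', ← Finset.erase_insert h2', he]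
  · rw [Finset.disjoint_left]
    intro B hB hB'
    obtain ⟨C, hC, rfl⟩ := Finset.mem_image.1 hB'
    exact Finset.notMem_erase i A ((Finset.mem_powersetCard.1 hB).1 (Finset.mem_insert_self i C))

variable {ι : Type*} [DecidableEq ι]



lemma powersetCard_erase (A : Finset ι) (i : ι) (j : ℕ) :
    (A.erase i).powersetCard j = (A.powersetCard j).filter (fun B => i ∉ B) := by
  ext B
  simp only [Finset.mem_powersetCard, Finset.mem_filter, Finset.subset_erase]
  tauto

lemma esF_sum_erase (A : Finset ι) (j : ℕ) (v : ι → ℝ) :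
    (∑ i ∈ A, esF (A.erase i) j v) + (j : ℝ) * esF A j v = (A.card : ℝ) * esF A j v := by
  unfold esF
  have key : ∀ i, i ∈ A → esF (A.erase i) j v
      = ∑ B ∈ A.powersetCard j, (if i ∉ B then ∏ x ∈ B, v x else 0) := by
    intro i _
    rw [esF, powersetCard_erase, Finset.sum_filter]
  calc (∑ i ∈ A, esF (A.erase i) j v) + (j:ℝ) * ∑ B ∈ A.powersetCard j, ∏ i ∈ B, v i
      = (∑ B ∈ A.powersetCard j, ((A \ B).card : ℝ) * ∏ i ∈ B, v i)
        + (j:ℝ) * ∑ B ∈ A.powersetCard j, ∏ i ∈ B, v i := by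
        congr 1
        rw [Finset.sum_congr rfl key, Finset.sum_comm]
        refine Finset.sum_congr rfl fun B hB => ?_
        rw [Finset.sum_ite, Finset.sum_const, Finset.sum_const_zero, add_zero]
        rw [← Finset.sdiff_eq_filter]
        simp [nsmul_eq_mul]
    _ = ∑ B ∈ A.powersetCard j, (((A \ B).card : ℝ) + j) * ∏ i ∈ B, v i := by
        rw [Finset.mul_sum, ← Finset.sum_add_distrib]
        exact Finset.sum_congr rfl fun B hB => by ring
    _ = (A.card : ℝ) * ∑ B ∈ A.powersetCard j, ∏ i ∈ B, v i := by
        rw [Finset.mul_sum]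
        refine Finset.sum_congr rfl fun B hB => ?_
        obtain ⟨hBA, hcard⟩ := Finset.mem_powersetCard.1 hB
        have := Finset.card_sdiff_add_card_eq_card hBA
        rw [hcard] at this
        rw [← this]
        push_cast
        ring

lemma esF_top (A : Finset ι) (M : ℕ) (hA : A.card = M + 1) (v : ι → ℝ) :
    esF A M v = ∑ i ∈ A, ∏ x ∈ A.erase i, v x := by
  unfold esF
  have himg : A.powersetCard M = A.image (fun i => A.erase i) := by
    ext B
    simp only [Finset.mem_powersetCard, Finset.mem_image]
    constructor
    · rintro ⟨hBA, hcard⟩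
      have h1 : (A \ B).card = 1 := by
        rw [Finset.card_sdiff_of_subset hBA, hA, hcard]; omega
      obtain ⟨a, ha⟩ := Finset.card_eq_one.1 h1
      have haA : a ∈ A := by
        have : a ∈ A \ B := ha ▸ Finset.mem_singleton_self a
        exact (Finset.mem_sdiff.1 this).1
      refine ⟨a, haA, ?_⟩
      rw [Finset.erase_eq, ← ha, Finset.sdiff_sdiff_self_left, Finset.inter_eq_right.2 hBA]
    · rintro ⟨i, hi, rfl⟩
      exact ⟨Finset.erase_subset i A, by rw [Finset.card_erase_of_mem hi, hA]; rfl⟩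
  rw [himg, Finset.sum_image (fun x hx y hy => (Finset.erase_inj A hx).mp)]


lemma newton_base (A : Finset ι) (r : ℕ) (hA : A.card = r + 2) (v : ι → ℝ) :
    2 * ((r:ℝ)+2) * (esF A r v * esF A (r+2) v) ≤ ((r:ℝ)+1) * (esF A (r+1) v)^2 := by
  set Q : ι → ℝ := fun i => ∏ x ∈ A.erase i, v x with hQ
  have htop : esF A (r+2) v = ∏ x ∈ A, v x := by
    unfold esF
    rw [← hA, Finset.powersetCard_self, Finset.sum_singleton]
  have h1 : esF A (r+1) v = ∑ i ∈ A, Q i := esF_top A (r+1) hA v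
  have h2 : 2 * esF A r v = ∑ i ∈ A, esF (A.erase i) r v := by
    have := esF_sum_erase A r v
    rw [hA] at this
    push_cast at this ⊢
    linarith
  have hQQ : ∀ i ∈ A, ∀ j ∈ A.erase i,
      Q i * Q j = (∏ x ∈ A, v x) * ∏ x ∈ (A.erase i).erase j, v x := by
    intro i hi j hj
    have hij : j ≠ i := Finset.ne_of_mem_erase hj
    have hjA : j ∈ A := Finset.mem_of_mem_erase hj
    have hij' : i ∈ A.erase j := Finset.mem_erase.2 ⟨hij.symm, hi⟩
    have e1 : Q i = v j * ∏ x ∈ (A.erase i).erase j, v x := (Finset.mul_prod_erase _ v hj).symm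
    have e2 : Q j = v i * ∏ x ∈ (A.erase j).erase i, v x := (Finset.mul_prod_erase _ v hij').symm
    have e3 : (A.erase j).erase i = (A.erase i).erase j := Finset.erase_right_comm
    have e4 : (∏ x ∈ A, v x) = v i * Q i := (Finset.mul_prod_erase _ v hi).symm
    rw [e1, e2, e3, e4, e1]
    ring
  have hsum2 : ∀ i ∈ A, esF (A.erase i) r v = ∑ j ∈ A.erase i, ∏ x ∈ (A.erase i).erase j, v x := by
    intro i hi
    exact esF_top (A.erase i) r (by rw [Finset.card_erase_of_mem hi, hA]; omega) v
  have key : (∏ x ∈ A, v x) * (2 * esF A r v)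
      = (∑ i ∈ A, Q i)^2 - ∑ i ∈ A, (Q i)^2 := by
    rw [h2, Finset.mul_sum]
    have : ∀ i ∈ A, (∏ x ∈ A, v x) * esF (A.erase i) r v = (∑ j ∈ A.erase i, Q i * Q j) := by
      intro i hi
      rw [hsum2 i hi, Finset.mul_sum]
      exact Finset.sum_congr rfl fun j hj => (hQQ i hi j hj).symm
    rw [Finset.sum_congr rfl this]
    have expand : (∑ i ∈ A, Q i)^2 = ∑ i ∈ A, (∑ j ∈ A.erase i, Q i * Q j + Q i * Q i) := by
      rw [sq, Finset.sum_mul_sum]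
      refine Finset.sum_congr rfl fun i hi => ?_
      rw [Finset.sum_erase_add A _ hi]
    rw [expand, Finset.sum_add_distrib]
    simp only [← sq]
    ring
  have cauchy : (∑ i ∈ A, Q i)^2 ≤ ((r:ℝ)+2) * ∑ i ∈ A, (Q i)^2 := by
    have := sq_sum_le_card_mul_sum_sq (s := A) (f := Q)
    rw [hA] at this
    push_cast at this
    linarith
  have hsq : 0 ≤ (∑ i ∈ A, Q i)^2 := sq_nonneg _
  calc 2 * ((r:ℝ)+2) * (esF A r v * esF A (r+2) v)
      = ((r:ℝ)+2) * ((∏ x ∈ A, v x) * (2 * esF A r v)) := by rw [htop]; ring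
    _ = ((r:ℝ)+2) * ((∑ i ∈ A, Q i)^2 - ∑ i ∈ A, (Q i)^2) := by rw [key]
    _ ≤ ((r:ℝ)+1) * (∑ i ∈ A, Q i)^2 := by nlinarith
    _ = ((r:ℝ)+1) * (esF A (r+1) v)^2 := by rw [h1]

end Helpers

section NewtonIneq

lemma deriv_step (s : Multiset ℝ) (N : ℕ) (hN : Multiset.card s = N) (hN1 : 1 ≤ N) :
    ∃ t : Multiset ℝ, Multiset.card t = N - 1 ∧
      ∀ j, j ≤ N - 1 → (N:ℝ) * t.esymm j = ((N - j : ℕ) : ℝ) * s.esymm j := by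
  set P : Polynomial ℝ := (s.map fun a => X - C a).prod with hP
  have hPm : P.Monic := monic_multiset_prod_of_monic _ _ (fun a _ => monic_X_sub_C _)
  have hdeg : P.natDegree = N := by
    rw [hP, natDegree_multiset_prod_X_sub_C_eq_card, hN]
  have hroots : P.roots = s := roots_multiset_prod_X_sub_C s
  set P' : Polynomial ℝ := derivative P with hP'
  have hdegle : P'.natDegree ≤ N - 1 := by
    have := natDegree_derivative_le P; rw [hdeg] at this; exact this
  have hcardge : N - 1 ≤ Multiset.card P'.roots := by
    have := P.card_roots_le_derivative
    rw [hroots, hN, ← hP'] at this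
    omega
  have hcardle : Multiset.card P'.roots ≤ P'.natDegree := card_roots' P'
  have hcard : Multiset.card P'.roots = N - 1 := le_antisymm (hcardle.trans hdegle) hcardge
  have hdeg' : P'.natDegree = N - 1 := le_antisymm hdegle (hcardge.trans hcardle)
  refine ⟨P'.roots, hcard, fun j hj => ?_⟩
  have hcoeffP : ∀ m, m ≤ N → P.coeff m = (-1)^(N - m) * s.esymm (N - m) := by
    intro m hm
    rw [hP, Multiset.prod_X_sub_C_coeff s (by omega), hN]
  have hesymm0 : s.esymm 0 = 1 := by simp [Multiset.esymm]
  have hlead : P'.leadingCoeff = (N : ℝ) := by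
    rw [leadingCoeff, hdeg', hP', coeff_derivative, show N - 1 + 1 = N from by omega,
      hcoeffP N le_rfl, Nat.sub_self, hesymm0]
    simp only [pow_zero, one_mul, mul_one]
    rw [Nat.cast_sub hN1]
    norm_num
  have key := Polynomial.coeff_eq_esymm_roots_of_card (p := P')
    (by rw [hcard, hdeg']) (k := N - 1 - j) (by omega)
  rw [hdeg', show N - 1 - (N - 1 - j) = j from by omega, hlead] at key
  have key2 : P'.coeff (N - 1 - j) = P.coeff (N - j) * ((N - j : ℕ) : ℝ) := by
    rw [hP', coeff_derivative, show N - 1 - j + 1 = N - j from by omega]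
    congr 1
    exact_mod_cast congrArg (Nat.cast : ℕ → ℝ) (show (N - 1 - j) + 1 = N - j from by omega)
  rw [key2, hcoeffP (N - j) (by omega), show N - (N - j) = j from by omega] at key
  have hne : ((-1:ℝ))^j ≠ 0 := pow_ne_zero _ (by norm_num)
  apply mul_left_cancel₀ hne
  linear_combination -key




lemma choose_id (M j : ℕ) : (M+1) * M.choose j = (M+1).choose j * (M+1-j) := by
  rw [← Nat.choose_succ_right_eq]
  exact Nat.add_one_mul_choose_eq M j

lemma choose_two_mul (r : ℕ) : 2 * ((r+2).choose r : ℝ) = ((r:ℝ)+2) * ((r:ℝ)+1) := by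
  have h4 : (r+2).choose r = (r+2).choose 2 := by
    have := Nat.choose_symm (show 2 ≤ r+2 by omega)
    simpa [show r+2-2 = r from rfl] using this
  have h5 : (r+2) * (r+1) = (r+2).choose 2 * 2 := by
    have := Nat.add_one_mul_choose_eq (r+1) 1
    rwa [Nat.choose_one_right] at this
  have h6 : 2 * (r+2).choose r = (r+2) * (r+1) := by rw [h4]; omega
  have h' := congrArg (Nat.cast : ℕ → ℝ) h6
  push_cast at h'
  linarith

theorem newtonM : ∀ (N : ℕ) (s : Multiset ℝ), Multiset.card s = N → ∀ (r : ℕ), r + 2 ≤ N →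
    ((N.choose (r+1) : ℝ))^2 * (s.esymm r * s.esymm (r+2))
      ≤ ((N.choose r : ℝ) * (N.choose (r+2) : ℝ)) * (s.esymm (r+1))^2 := by
  intro N
  induction N with
  | zero => intro s hs r h2; exact absurd h2 (by omega)
  | succ N IH =>
    intro s hs r h2
    rcases eq_or_lt_of_le h2 with heq | hlt
    · -- base case: r + 2 = N + 1, so N = r + 1
      have hNr : N = r + 1 := by omega
      subst hNr
      have hsN : Multiset.card s = r + 2 := by omega
      set l := s.toList with hldef
      have hl : (l : Multiset ℝ) = s := Multiset.coe_toList s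
      have hlen : l.length = r + 2 := by rw [hldef, Multiset.length_toList, hsN]
      set v : Fin l.length → ℝ := l.get with hv
      have huniv : (Finset.univ : Finset (Fin l.length)).val.map v = s := by
        have h1 : (Finset.univ : Finset (Fin l.length)).val = ↑(List.finRange l.length) := rfl
        rw [h1, Multiset.map_coe, List.map_get_finRange, hl]
      have hconv : ∀ j, s.esymm j = esF (Finset.univ : Finset (Fin l.length)) j v := by
        intro j
        rw [esF_multiset, huniv]
      have hcardu : (Finset.univ : Finset (Fin l.length)).card = r + 2 := by
        rw [Finset.card_univ, Fintype.card_fin, hlen]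
      have base := newton_base (Finset.univ : Finset (Fin l.length)) r hcardu v
      rw [← hconv r, ← hconv (r+1), ← hconv (r+2)] at base
      have c1 : ((r+1+1).choose (r+2) : ℝ) = 1 := by norm_num [Nat.choose_self]
      have c2 : ((r+1+1).choose (r+1) : ℝ) = (r:ℝ) + 2 := by
        rw [Nat.choose_succ_self_right]; push_cast; ring
      have c3 := choose_two_mul r
      rw [show r+1+1 = r+2 from rfl] at c1 c2 ⊢
      rw [c2, c1, mul_one]
      have expand : ((r:ℝ)+2) * (2 * ((r:ℝ)+2) * (s.esymm r * s.esymm (r+2)))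
          ≤ ((r:ℝ)+2) * (((r:ℝ)+1) * (s.esymm (r+1))^2) :=
        mul_le_mul_of_nonneg_left base (by positivity)
      nlinarith [expand, c3]
    · -- inductive step
      have h2' : r + 2 ≤ N := by omega
      obtain ⟨t, hct, hrel⟩ := deriv_step s (N+1) hs (by omega)
      simp only [Nat.add_sub_cancel] at hct hrel
      have IHt := IH t hct r h2'
      have cast_sub : ∀ j, j ≤ N + 1 → ((N+1-j : ℕ) : ℝ) = ((N:ℝ)+1) - j := by
        intro j hj
        rw [Nat.cast_sub hj]
        push_cast
        ring
      have hb : ∀ j, j ≤ N → ((N:ℝ)+1) * t.esymm j = (((N:ℝ)+1) - j) * s.esymm j := by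
        intro j hj
        have h := hrel j hj
        rw [cast_sub j (by omega)] at h
        push_cast at h ⊢
        linarith
      have hc : ∀ j, j ≤ N → ((N:ℝ)+1) * (N.choose j : ℝ)
          = ((N+1).choose j : ℝ) * (((N:ℝ)+1) - j) := by
        intro j hj
        have h := congrArg (Nat.cast : ℕ → ℝ) (choose_id N j)
        rw [Nat.cast_mul, Nat.cast_mul, cast_sub j (by omega)] at h
        push_cast at h ⊢
        linarith
      have hb0 := hb r (by omega); have hb1 := hb (r+1) (by omega); have hb2 := hb (r+2) (by omega)
      have hc0 := hc r (by omega); have hc1 := hc (r+1) (by omega); have hc2 := hc (r+2) (by omega)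
      push_cast at hb1 hb2 hc1 hc2
      have hrc : (r:ℝ) + 2 ≤ (N:ℝ) := by exact_mod_cast h2'
      have hw0 : (0:ℝ) < ((N:ℝ)+1) - r := by linarith
      have hw1 : (0:ℝ) < ((N:ℝ)+1) - (r+1) := by linarith
      have hw2 : (0:ℝ) < ((N:ℝ)+1) - (r+2) := by linarith
      have H := mul_le_mul_of_nonneg_left IHt (by positivity : (0:ℝ) ≤ ((N:ℝ)+1)^4)
      have E1 : ((N:ℝ)+1)^4 * ((N.choose (r+1) : ℝ)^2 * (t.esymm r * t.esymm (r+2)))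
          = ((((N:ℝ)+1)-r) * (((N:ℝ)+1)-(r+1))^2 * (((N:ℝ)+1)-(r+2)))
            * (((N+1).choose (r+1) : ℝ)^2 * (s.esymm r * s.esymm (r+2))) := by
        calc ((N:ℝ)+1)^4 * ((N.choose (r+1) : ℝ)^2 * (t.esymm r * t.esymm (r+2)))
            = (((N:ℝ)+1) * (N.choose (r+1) : ℝ))^2
              * ((((N:ℝ)+1) * t.esymm r) * (((N:ℝ)+1) * t.esymm (r+2))) := by ring
          _ = (((N+1).choose (r+1) : ℝ) * (((N:ℝ)+1)-(r+1)))^2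
              * (((((N:ℝ)+1)-r) * s.esymm r) * ((((N:ℝ)+1)-(r+2)) * s.esymm (r+2))) := by
              rw [hc1, hb0, hb2]
          _ = _ := by ring
      have E2 : ((N:ℝ)+1)^4 * (((N.choose r : ℝ) * (N.choose (r+2) : ℝ)) * (t.esymm (r+1))^2)
          = ((((N:ℝ)+1)-r) * (((N:ℝ)+1)-(r+1))^2 * (((N:ℝ)+1)-(r+2)))
            * ((((N+1).choose r : ℝ) * ((N+1).choose (r+2) : ℝ)) * (s.esymm (r+1))^2) := by
        calc ((N:ℝ)+1)^4 * (((N.choose r : ℝ) * (N.choose (r+2) : ℝ)) * (t.esymm (r+1))^2)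
            = ((((N:ℝ)+1) * (N.choose r : ℝ)) * (((N:ℝ)+1) * (N.choose (r+2) : ℝ)))
              * (((N:ℝ)+1) * t.esymm (r+1))^2 := by ring
          _ = ((((N+1).choose r : ℝ) * (((N:ℝ)+1)-r)) * (((N+1).choose (r+2) : ℝ) * (((N:ℝ)+1)-(r+2))))
              * (((((N:ℝ)+1)-(r+1)) * s.esymm (r+1)))^2 := by rw [hc0, hc2, hb1]
          _ = _ := by ring
      rw [E1, E2] at H
      have hW : (0:ℝ) < (((N:ℝ)+1)-r) * (((N:ℝ)+1)-(r+1))^2 * (((N:ℝ)+1)-(r+2)) := by positivity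
      have := le_of_mul_le_mul_left H hW
      push_cast at this ⊢
      linarith


lemma choose_strict_logconcave (M r : ℕ) (h : r + 2 ≤ M) :
    (M.choose r : ℝ) * (M.choose (r+2) : ℝ) < ((M.choose (r+1) : ℝ))^2 := by
  have i1 : M.choose (r+1) * (r+1) = M.choose r * (M - r) := Nat.choose_succ_right_eq M r
  have i2 : M.choose (r+2) * (r+2) = M.choose (r+1) * (M - (r+1)) := Nat.choose_succ_right_eq M (r+1)
  have hx : 0 < (M.choose r : ℝ) := by exact_mod_cast Nat.choose_pos (by omega)
  have hy : 0 < (M.choose (r+1) : ℝ) := by exact_mod_cast Nat.choose_pos (by omega)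
  set x := (M.choose r : ℝ); set y := (M.choose (r+1) : ℝ); set z := (M.choose (r+2) : ℝ)
  have hu : ((M - r : ℕ) : ℝ) = (M:ℝ) - r := by rw [Nat.cast_sub (by omega)]
  have hw : ((M - (r+1) : ℕ) : ℝ) = (M:ℝ) - r - 1 := by
    rw [Nat.cast_sub (by omega)]; push_cast; ring
  have i1' : y * ((r:ℝ)+1) = x * ((M:ℝ) - r) := by
    have := congrArg (Nat.cast : ℕ → ℝ) i1
    push_cast [hu] at this
    linarith
  have i2' : z * ((r:ℝ)+2) = y * ((M:ℝ) - r - 1) := by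
    have := congrArg (Nat.cast : ℕ → ℝ) i2
    push_cast [hw] at this
    linarith
  have hM : ((r:ℝ)+2) ≤ (M:ℝ) := by exact_mod_cast h
  -- z * (r+1)(r+2) = x * (M-r)(M-r-1)
  have e2 : z * (((r:ℝ)+1) * ((r:ℝ)+2)) = x * (((M:ℝ)-r) * ((M:ℝ)-r-1)) := by
    have e1 : (y * ((r:ℝ)+1)) * (z * ((r:ℝ)+2)) = (x * ((M:ℝ)-r)) * (y * ((M:ℝ)-r-1)) := by
      rw [i1', i2']
    have := mul_left_cancel₀ hy.ne' (show y * (z * (((r:ℝ)+1) * ((r:ℝ)+2)))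
        = y * (x * (((M:ℝ)-r) * ((M:ℝ)-r-1))) from by linear_combination e1)
    exact this
  -- y^2 (r+1)^2 = x^2 (M-r)^2
  have e3 : y^2 * ((r:ℝ)+1)^2 = x^2 * ((M:ℝ)-r)^2 := by
    linear_combination (y * ((r:ℝ)+1) + x * ((M:ℝ)-r)) * i1'
  -- conclude
  have hD : (0:ℝ) < ((r:ℝ)+1)^2 * ((r:ℝ)+2) := by positivity
  have key : x * z * (((r:ℝ)+1)^2 * ((r:ℝ)+2)) < y^2 * (((r:ℝ)+1)^2 * ((r:ℝ)+2)) := by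
    have l1 : x * z * (((r:ℝ)+1)^2 * ((r:ℝ)+2)) = x^2 * (((M:ℝ)-r) * ((M:ℝ)-r-1)) * ((r:ℝ)+1) := by
      linear_combination (x * ((r:ℝ)+1)) * e2
    have l2 : y^2 * (((r:ℝ)+1)^2 * ((r:ℝ)+2)) = x^2 * ((M:ℝ)-r)^2 * ((r:ℝ)+2) := by
      linear_combination ((r:ℝ)+2) * e3
    rw [l1, l2]
    have hMr : (0:ℝ) < (M:ℝ) - r := by linarith
    have hfin : (0:ℝ) < x^2 * ((M:ℝ)-r) * ((M:ℝ)+1) :=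
      mul_pos (mul_pos (pow_pos hx 2) hMr) (by positivity)
    have hring : x^2*((M:ℝ)-(r:ℝ))^2*((r:ℝ)+2) - x^2*(((M:ℝ)-(r:ℝ))*((M:ℝ)-(r:ℝ)-1))*((r:ℝ)+1)
        = x^2*((M:ℝ)-(r:ℝ))*((M:ℝ)+1) := by ring
    linarith
  exact lt_of_mul_lt_mul_right key (le_of_lt hD)

end NewtonIneq

section Main



lemma restriction {n k : ℕ} (hk1 : 1 ≤ k) (hkn : k ≤ n) (v : Fin n → ℝ)
    (H : ∀ j, 1 ≤ j → j ≤ k → 0 ≤ esF (Finset.univ : Finset (Fin n)) j v) (i : Fin n) :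
    ∀ j, j + 1 ≤ k → 0 ≤ esF (Finset.univ.erase i) j v := by
  classical
  set A := (Finset.univ : Finset (Fin n)).erase i with hA
  have hcardA : A.card = n - 1 := by
    rw [hA, Finset.card_erase_of_mem (Finset.mem_univ i), Finset.card_univ, Fintype.card_fin]
  have hsplit : ∀ j : ℕ, esF Finset.univ (j+1) v = esF A (j+1) v + v i * esF A j v :=
    fun j => esF_erase (Finset.mem_univ i) j v
  rcases le_or_gt (v i) 0 with hx | hx
  · have strong : ∀ j, j ≤ k → 0 ≤ esF A j v := by
      intro j
      induction j with
      | zero => intro _; rw [esF_zero]; norm_num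
      | succ m IHm =>
        intro hm
        have h1 := H (m+1) (by omega) hm
        rw [hsplit m] at h1
        have h2 := IHm (by omega)
        nlinarith
    exact fun j hj => strong j (by omega)
  · by_contra hcon
    push_neg at hcon
    obtain ⟨j0, hj0k, hj0neg⟩ := hcon
    have hex : ∃ j, j + 1 ≤ k ∧ esF A j v < 0 := ⟨j0, hj0k, hj0neg⟩
    obtain ⟨hmk, hmneg⟩ := Nat.find_spec hex
    have hm0 : Nat.find hex ≠ 0 := by
      intro h0
      rw [h0, esF_zero] at hmneg; norm_num at hmneg
    obtain ⟨r, hr⟩ := Nat.exists_eq_succ_of_ne_zero hm0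
    rw [hr] at hmk hmneg
    have hEr : 0 ≤ esF A r v := by
      by_contra hneg; push_neg at hneg
      exact Nat.find_min hex (show r < Nat.find hex by omega) ⟨by omega, hneg⟩
    set E0 := esF A r v
    set E1 := esF A (r+1) v
    set E2 := esF A (r+2) v
    have p1 : 0 ≤ E1 + v i * E0 := by
      have := H (r+1) (by omega) (by omega)
      rwa [hsplit r] at this
    have p2 : 0 ≤ E2 + v i * E1 := by
      have := H (r+2) (by omega) (by omega)
      rwa [hsplit (r+1)] at this
    have hE1 : E1 < 0 := hmneg
    have hE2 : 0 < E2 := by nlinarith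
    rcases lt_or_ge (n - 1) (r+2) with hcase | hcase
    · have : E2 = 0 := esF_eq_zero A (by omega) v
      linarith
    · have hcardmu : Multiset.card (A.val.map v) = n - 1 := by
        rw [Multiset.card_map]; exact hcardA
      have newton := newtonM (n-1) (A.val.map v) hcardmu r hcase
      rw [← esF_multiset, ← esF_multiset, ← esF_multiset] at newton
      have strict := choose_strict_logconcave (n-1) r hcase
      have hE1sq : 0 < E1^2 := by nlinarith [mul_pos_of_neg_of_neg hE1 hE1]
      have q4 : E1^2 ≤ E0 * E2 := by
        have q1 : (-E1) * E2 ≤ (v i * E0) * E2 := mul_le_mul_of_nonneg_right (by linarith) (le_of_lt hE2)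
        have q2 : (-E1) * (v i * (-E1)) ≤ (-E1) * E2 := mul_le_mul_of_nonneg_left (by linarith) (by linarith)
        have q3 : v i * E1^2 ≤ v i * (E0 * E2) := by nlinarith
        exact le_of_mul_le_mul_left q3 hx
      have u1 : ((n-1 : ℕ).choose (r+1) : ℝ)^2 * E1^2 ≤ ((n-1 : ℕ).choose (r+1) : ℝ)^2 * (E0 * E2) :=
        mul_le_mul_of_nonneg_left q4 (by positivity)
      have u3 : ((n-1 : ℕ).choose r : ℝ) * ((n-1 : ℕ).choose (r+2) : ℝ) * E1^2
          < ((n-1 : ℕ).choose (r+1) : ℝ)^2 * E1^2 :=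
        mul_lt_mul_of_pos_right strict hE1sq
      linarith






lemma esymmS_eq (n j : ℕ) (l : Fin n → ℝ) : esymmS n j l = esF Finset.univ j l := rfl

lemma single_bump {n : ℕ} (v : Fin n → ℝ) (i : Fin n) (c : ℝ) (j : ℕ) :
    esF Finset.univ (j+1) (Function.update v i c)
      = esF (Finset.univ.erase i) (j+1) v + c * esF (Finset.univ.erase i) j v := by
  rw [esF_erase (Finset.mem_univ i) j (Function.update v i c)]
  have h1 : ∀ m : ℕ, esF (Finset.univ.erase i) m (Function.update v i c)
      = esF (Finset.univ.erase i) m v := by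
    intro m
    refine esF_congr (fun x hx => ?_) m
    exact Function.update_of_ne (Finset.ne_of_mem_erase hx) c v
  rw [h1, h1, Function.update_self]

lemma gamma_step {n k : ℕ} (hk1 : 1 ≤ k) (hkn : k ≤ n) (w : Fin n → ℝ)
    (Hw : ∀ j, 1 ≤ j → j ≤ k → 0 ≤ esF Finset.univ j w) (i : Fin n) {t : ℝ} (ht : 0 ≤ t) :
    ∀ j, 1 ≤ j → j ≤ k → 0 ≤ esF Finset.univ j (Function.update w i (w i + t)) := by
  intro j hj1 hjk
  obtain ⟨m, rfl⟩ := Nat.exists_eq_succ_of_ne_zero (by omega : j ≠ 0)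
  rw [single_bump]
  have hold := Hw (m+1) hj1 hjk
  rw [esF_erase (Finset.mem_univ i) m w] at hold
  have hrest := restriction hk1 hkn w Hw i m (by omega)
  nlinarith

lemma gamma_mono {n k : ℕ} (hk1 : 1 ≤ k) (hkn : k ≤ n) (v : Fin n → ℝ)
    (Hv : ∀ j, 1 ≤ j → j ≤ k → 0 ≤ esF Finset.univ j v) :
    ∀ (T : Finset (Fin n)) (η : Fin n → ℝ), (∀ i, 0 ≤ η i) → (∀ i ∉ T, η i = 0) →
      ∀ j, 1 ≤ j → j ≤ k → 0 ≤ esF Finset.univ j (v + η) := by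
  intro T
  induction T using Finset.induction_on with
  | empty =>
    intro η hpos hsupp j hj1 hjk
    have : v + η = v := funext fun x => by
      have := hsupp x (Finset.notMem_empty x); simp [this]
    rw [this]; exact Hv j hj1 hjk
  | insert a T ha IH =>
    intro η hpos hsupp j hj1 hjk
    set η' := Function.update η a 0 with hη'
    have hpos' : ∀ i, 0 ≤ η' i := by
      intro i
      rcases eq_or_ne i a with rfl | hne
      · simp [hη']
      · simpa [hη', Function.update_of_ne hne] using hpos i
    have hsupp' : ∀ i ∉ T, η' i = 0 := by
      intro i hi
      rcases eq_or_ne i a with rfl | hne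
      · simp [hη']
      · rw [hη', Function.update_of_ne hne]
        exact hsupp i (by simp [hne, hi])
    have IH' := IH η' hpos' hsupp'
    have key := gamma_step hk1 hkn (v + η') IH' a (hpos a)
    have heq : Function.update (v + η') a ((v + η') a + η a) = v + η := by
      funext x
      rcases eq_or_ne x a with rfl | hne
      · simp [hη', Function.update_self]
      · simp [Function.update_of_ne hne, hη', Pi.add_apply]
    rw [heq] at key
    exact key j hj1 hjk

lemma descend {n : ℕ} : ∀ (k : ℕ), 1 ≤ k → k ≤ n → ∀ (v : Fin n → ℝ),
    (∀ η : Fin n → ℝ, (∀ i, 0 ≤ η i) → 0 ≤ esF Finset.univ k (v + η)) →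
    ∀ j, 1 ≤ j → j ≤ k → 0 ≤ esF Finset.univ j v := by
  intro k
  induction k with
  | zero => intro h; omega
  | succ m IHk =>
    intro _ hkn v Hyp j hj1 hjk
    rcases eq_or_lt_of_le hjk with rfl | hlt
    · -- j = m + 1
      have := Hyp 0 (fun i => le_refl 0)
      have hv0 : v + 0 = v := by funext x; simp
      rwa [hv0] at this
    · -- j ≤ m
      have hm1 : 1 ≤ m := by omega
      refine IHk hm1 (by omega) v ?_ j hj1 (by omega)
      intro η hpos
      set w := v + η with hw
      -- each coefficient b_i := esF (erase i) m w is nonneg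
      have hb : ∀ i : Fin n, 0 ≤ esF (Finset.univ.erase i) m w := by
        intro i
        by_contra hneg
        push_neg at hneg
        set b := esF (Finset.univ.erase i) m w with hbdef
        set a := esF Finset.univ (m+1) w with hadef
        have ha : 0 ≤ a := by
          have := Hyp η hpos
          rwa [← hw] at this
        set t : ℝ := (a + 1) / (-b) with htdef
        have ht : 0 ≤ t := by
          apply div_nonneg (by linarith) (by linarith)
        have hval := Hyp (fun x => η x + if x = i then t else 0)
          (fun x => add_nonneg (hpos x) (by by_cases hxi : x = i <;> simp [hxi, ht]))
        have heq : v + (fun x => η x + if x = i then t else 0)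
            = Function.update w i (w i + t) := by
          funext x
          rcases eq_or_ne x i with rfl | hne
          · simp [Function.update_self, hw, Pi.add_apply]; ring
          · simp [Function.update_of_ne hne, hw, Pi.add_apply, hne]
        rw [heq, single_bump] at hval
        have hexp : esF (Finset.univ.erase i) (m+1) w + (w i + t) * esF (Finset.univ.erase i) m w
            = a + t * b := by
          rw [hadef, esF_erase (Finset.mem_univ i) m w, hbdef]
          ring
        rw [hexp] at hval
        have htb : t * b = -(a + 1) := by
          rw [htdef, div_mul_eq_mul_div, div_eq_iff (show -b ≠ 0 from ne_of_gt (by linarith))]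
          ring
        rw [htb] at hval
        linarith
      -- sum over i
      have hsum := esF_sum_erase (Finset.univ : Finset (Fin n)) m w
      rw [Finset.card_univ, Fintype.card_fin] at hsum
      have hsumnn : 0 ≤ ∑ i : Fin n, esF (Finset.univ.erase i) m w :=
        Finset.sum_nonneg fun i _ => hb i
      have hnm : (m : ℝ) + 1 ≤ (n : ℝ) := by exact_mod_cast hkn
      nlinarith [hsum, hsumnn]

/-- Γ_k = {λ : S_k(λ+η) ≥ 0 for all η ≥ 0}. -/
theorem stmt5 (n k : ℕ) (hk1 : 1 ≤ k) (hkn : k ≤ n) :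
    {lam : Fin n → ℝ | ∀ j, 1 ≤ j → j ≤ k → 0 ≤ esymmS n j lam}
      = {lam : Fin n → ℝ | ∀ eta : Fin n → ℝ, (∀ i, 0 ≤ eta i) → 0 ≤ esymmS n k (lam + eta)} := by
  ext lam
  simp only [Set.mem_setOf_eq, esymmS_eq]
  constructor
  · intro hlam eta heta
    exact gamma_mono hk1 hkn lam hlam Finset.univ eta heta
      (fun i hi => absurd (Finset.mem_univ i) hi) k hk1 le_rfl
  · intro hlam
    exact descend k hk1 hkn lam hlam

end Main
end

section
/- If λ ∈ Γ_k (i.e. S_j(λ) ≥ 0 for j = 1,...,k) and η ∈ ℝ^n has all coordinates nonnegative, then 0 ≤ S_k(λ) ≤ S_k(λ + η); that is, S_k is monotone on Γ_k with respect to coordinatewise increases. -/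
open Polynomial Multiset

namespace Stmt6Aux


lemma choose_strict (M m : ℕ) (h : m + 1 ≤ M) :
    M.choose m * M.choose (m + 2) < M.choose (m + 1) ^ 2 := by
  have h1 : M.choose (m + 1) * (m + 1) = M.choose m * (M - m) :=
    Nat.choose_succ_right_eq M m
  have h2 : M.choose (m + 2) * (m + 2) = M.choose (m + 1) * (M - (m + 1)) :=
    Nat.choose_succ_right_eq M (m + 1)
  have hc0 : 0 < M.choose m := Nat.choose_pos (by omega)
  have hc1 : 0 < M.choose (m + 1) := Nat.choose_pos h
  obtain ⟨e, he⟩ : ∃ e, M - m = e + 1 := ⟨M - m - 1, by omega⟩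
  have he' : M - (m + 1) = e := by omega
  have inner : e * (m + 1) < (e + 1) * (m + 2) := by nlinarith
  have key : M.choose m * M.choose (m + 2) * ((m + 1) * (m + 2)) <
      M.choose (m + 1) ^ 2 * ((m + 1) * (m + 2)) := by
    have l1 : M.choose m * M.choose (m + 2) * ((m + 1) * (m + 2)) =
        (M.choose m * M.choose (m + 1)) * (e * (m + 1)) := by
      calc M.choose m * M.choose (m + 2) * ((m + 1) * (m + 2))
          = M.choose m * (M.choose (m + 2) * (m + 2)) * (m + 1) := by ring
        _ = M.choose m * (M.choose (m + 1) * (M - (m + 1))) * (m + 1) := by rw [h2]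
        _ = (M.choose m * M.choose (m + 1)) * ((M - (m + 1)) * (m + 1)) := by ring
        _ = (M.choose m * M.choose (m + 1)) * (e * (m + 1)) := by rw [he']
    have l2 : M.choose (m + 1) ^ 2 * ((m + 1) * (m + 2)) =
        (M.choose m * M.choose (m + 1)) * ((e + 1) * (m + 2)) := by
      calc M.choose (m + 1) ^ 2 * ((m + 1) * (m + 2))
          = (M.choose (m + 1) * (m + 1)) * (M.choose (m + 1) * (m + 2)) := by ring
        _ = (M.choose m * (M - m)) * (M.choose (m + 1) * (m + 2)) := by rw [h1]
        _ = (M.choose m * M.choose (m + 1)) * ((M - m) * (m + 2)) := by ring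
        _ = (M.choose m * M.choose (m + 1)) * ((e + 1) * (m + 2)) := by rw [he]
    rw [l1, l2]
    exact (Nat.mul_lt_mul_left (Nat.mul_pos hc0 hc1)).2 inner
  exact Nat.lt_of_mul_lt_mul_right key



lemma esymm_zero' (s : Multiset ℝ) : s.esymm 0 = 1 := by
  simp [Multiset.esymm]

lemma esymm_eq_zero (s : Multiset ℝ) (j : ℕ) (h : Multiset.card s < j) : s.esymm j = 0 := by
  simp [Multiset.esymm, Multiset.powersetCard_eq_empty _ h]

lemma esymm_cons (a : ℝ) (u : Multiset ℝ) (j : ℕ) :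
    (a ::ₘ u).esymm (j + 1) = u.esymm (j + 1) + a * u.esymm j := by
  simp only [Multiset.esymm, Multiset.powersetCard_cons, Multiset.map_add, Multiset.sum_add,
    Multiset.map_map, Function.comp]
  congr 1
  rw [← Multiset.sum_map_mul_left]
  congr 1
  apply Multiset.map_congr rfl
  intro x _
  simp [Multiset.prod_cons]


lemma top_newton : ∀ (m : ℕ) (s : Multiset ℝ), Multiset.card s = m + 2 →
    2 * ((m : ℝ) + 2) * (s.esymm m * s.esymm (m + 2)) ≤ ((m : ℝ) + 1) * s.esymm (m + 1) ^ 2 := by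
  intro m
  induction m with
  | zero =>
    intro s hs
    obtain ⟨a, b, rfl⟩ := Multiset.card_eq_two.1 hs
    have h0 : ({a, b} : Multiset ℝ).esymm 0 = 1 := esymm_zero' _
    have h1 : ({a, b} : Multiset ℝ).esymm 1 = a + b := by
      simp [Multiset.esymm, Multiset.powersetCard_one]; ring
    have h2 : ({a, b} : Multiset ℝ).esymm 2 = a * b := by
      simp [Multiset.esymm, Multiset.powersetCard_cons, Multiset.powersetCard_one]
    rw [show ((0:ℕ) + 2) = 2 from rfl, show ((0:ℕ) + 1) = 1 from rfl, h0, h1, h2]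
    push_cast
    nlinarith [sq_nonneg (a - b)]
  | succ m IH =>
    intro s hs
    obtain ⟨a, u, rfl⟩ : ∃ a u, s = a ::ₘ u := by
      obtain ⟨a, ha⟩ := Multiset.card_pos_iff_exists_mem.1 (by omega : 0 < Multiset.card s)
      obtain ⟨u, hu⟩ := Multiset.exists_cons_of_mem ha
      exact ⟨a, u, hu⟩
    have hu : Multiset.card u = m + 2 := by
      simpa using hs
    have key := IH u hu
    have e1 : (a ::ₘ u).esymm (m + 1) = u.esymm (m + 1) + a * u.esymm m := esymm_cons a u m
    have e2 : (a ::ₘ u).esymm (m + 2) = u.esymm (m + 2) + a * u.esymm (m + 1) :=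
      esymm_cons a u (m + 1)
    have e3 : (a ::ₘ u).esymm (m + 3) = a * u.esymm (m + 2) := by
      have := esymm_cons a u (m + 2)
      rwa [esymm_eq_zero u (m + 3) (by omega), zero_add] at this
    have g1 : ((m:ℕ) + 1 + 2) = m + 3 := by omega
    have g2 : ((m:ℕ) + 1 + 1) = m + 2 := by omega
    rw [g1, g2, e1, e2, e3]
    push_cast
    nlinarith [sq_nonneg (((m : ℝ) + 2) * u.esymm (m + 2) - a * u.esymm (m + 1)),
      mul_nonneg (sq_nonneg a)
        (by linarith : (0:ℝ) ≤ ((m : ℝ) + 1) * u.esymm (m + 1) ^ 2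
          - 2 * ((m : ℝ) + 2) * (u.esymm m * u.esymm (m + 2)))]


lemma exists_step (s : Multiset ℝ) (hs : 1 ≤ Multiset.card s) :
    ∃ t : Multiset ℝ, Multiset.card t + 1 = Multiset.card s ∧
      ∀ i, i < Multiset.card s →
        (Multiset.card s : ℝ) * t.esymm i = ((Multiset.card s - i : ℕ) : ℝ) * s.esymm i := by
  classical
  set N := Multiset.card s with hN
  set P : Polynomial ℝ := (s.map fun a => Polynomial.X + Polynomial.C a).prod with hP
  have hPeq : P = ((s.map fun a => -a).map fun a => Polynomial.X - Polynomial.C a).prod := by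
    rw [hP, Multiset.map_map]
    congr 1
    apply Multiset.map_congr rfl
    intro x _
    simp [sub_neg_eq_add]
  have hPdeg : P.natDegree = N := by
    rw [hPeq, Polynomial.natDegree_multiset_prod_X_sub_C_eq_card]
    simp [hN]
  have hProots : P.roots = s.map fun a => -a := by
    rw [hPeq, Polynomial.roots_multiset_prod_X_sub_C]
  have hPne : P ≠ 0 := by
    intro h
    rw [h] at hPdeg
    simp at hPdeg
    omega
  set D : Polynomial ℝ := Polynomial.derivative P with hD
  have hDdeg : D.natDegree = N - 1 := by
    have hle : D.natDegree ≤ N - 1 := hPdeg ▸ Polynomial.natDegree_derivative_le P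
    have hge : N - 1 ≤ Multiset.card D.roots := by
      have h5 := Polynomial.card_roots_le_derivative P
      rw [← hD, hProots] at h5
      simp only [Multiset.card_map] at h5
      omega
    have := Polynomial.card_roots' D
    omega
  have hDroots : Multiset.card D.roots = D.natDegree := by
    have hge : N - 1 ≤ Multiset.card D.roots := by
      have h5 := Polynomial.card_roots_le_derivative P
      rw [← hD, hProots] at h5
      simp only [Multiset.card_map] at h5
      omega
    have := Polynomial.card_roots' D
    omega
  have hDlead : D.leadingCoeff = (N : ℝ) := by
    rw [Polynomial.leadingCoeff, hDdeg]
    have : D.coeff (N - 1) = P.coeff (N - 1 + 1) * ((N : ℝ) - 1 + 1) := by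
      rw [hD, Polynomial.coeff_derivative]
      push_cast [Nat.cast_sub hs]
      ring_nf
    rw [this, show N - 1 + 1 = N from by omega]
    rw [show P.coeff N = 1 by
      have : P.Monic := Polynomial.monic_multiset_prod_of_monic _ _
        (fun a _ => Polynomial.monic_X_add_C a)
      rw [← hPdeg]; exact this.coeff_natDegree]
    ring
  have hfact : Polynomial.C D.leadingCoeff *
      (D.roots.map fun a => Polynomial.X - Polynomial.C a).prod = D :=
    Polynomial.C_leadingCoeff_mul_prod_multiset_X_sub_C (hDroots ▸ rfl)
  refine ⟨D.roots.map fun a => -a, ?_, ?_⟩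
  · simp only [Multiset.card_map]
    rw [hDroots, hDdeg]
    omega
  · intro i hi
    set t : Multiset ℝ := D.roots.map fun a => -a with ht
    have htcard : Multiset.card t = N - 1 := by
      simp [ht, hDroots, hDdeg]
    have hQ : (t.map fun a => Polynomial.X + Polynomial.C a).prod =
        (D.roots.map fun a => Polynomial.X - Polynomial.C a).prod := by
      rw [ht, Multiset.map_map]
      congr 1
      apply Multiset.map_congr rfl
      intro x _
      simp [sub_eq_add_neg]
    set c : ℕ := N - 1 - i with hc
    have hc1 : c ≤ Multiset.card t := by omega
    have hc2 : Multiset.card t - c = i := by omega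
    have hcoefft : (t.map fun a => Polynomial.X + Polynomial.C a).prod.coeff c = t.esymm i := by
      rw [Multiset.prod_X_add_C_coeff t hc1, hc2]
    -- D.coeff c = N * t.esymm i
    have hDc : D.coeff c = (N : ℝ) * t.esymm i := by
      conv_lhs => rw [← hfact]
      rw [Polynomial.coeff_C_mul, ← hQ, hcoefft, hDlead]
    -- D.coeff c = (c+1) * P.coeff (c+1)
    have hc3 : c + 1 = N - i := by omega
    have hc4 : N - (N - i) = i := by omega
    have hDc2 : D.coeff c = ((N - i : ℕ) : ℝ) * s.esymm i := by
      rw [hD, Polynomial.coeff_derivative, hc3]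
      rw [show P.coeff (N - i) = s.esymm i from by
        have := Multiset.prod_X_add_C_coeff s (show N - i ≤ Multiset.card s from by omega)
        rw [← hN, hc4] at this
        exact this]
      have : ((c : ℝ) + 1) = ((N - i : ℕ) : ℝ) := by
        rw [show ((N - i : ℕ) : ℝ) = ((c + 1 : ℕ) : ℝ) from by rw [hc3], Nat.cast_add,
          Nat.cast_one]
      rw [this]
      ring
    rw [← hDc, hDc2]


theorem newton (N : ℕ) : ∀ (s : Multiset ℝ), Multiset.card s = N → ∀ j : ℕ,
    s.esymm j * s.esymm (j + 2) * ((N.choose (j + 1) : ℝ)) ^ 2 ≤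
      (s.esymm (j + 1)) ^ 2 * ((N.choose j : ℝ) * (N.choose (j + 2) : ℝ)) := by
  induction N using Nat.strong_induction_on with
  | _ N IH =>
    intro s hcard j
    rcases lt_trichotomy N (j + 2) with hNj | hNj | hNj
    · -- degenerate
      rw [esymm_eq_zero s (j + 2) (by omega)]
      have : (0:ℝ) ≤ (s.esymm (j + 1)) ^ 2 * ((N.choose j : ℝ) * (N.choose (j + 2) : ℝ)) := by
        positivity
      linarith
    · -- base case N = j + 2
      subst hNj
      have top := top_newton j s hcard
      have hC1 : ((j + 2).choose (j + 1)) = j + 2 := Nat.choose_succ_self_right (j + 1)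
      have hC2 : ((j + 2).choose (j + 2)) = 1 := Nat.choose_self _
      have hC0 : ((j + 2).choose j) * 2 = (j + 2) * (j + 1) := by
        have h := Nat.choose_succ_right_eq (j + 2) j
        rw [hC1, show j + 2 - j = 2 from by omega] at h
        omega
      have hC0R : (((j + 2).choose j : ℕ) : ℝ) * 2 = ((j:ℝ) + 2) * ((j:ℝ) + 1) := by
        exact_mod_cast congrArg (fun x : ℕ => (x : ℝ)) hC0
      rw [hC1, hC2]
      push_cast
      nlinarith [top, hC0R]
    · -- reduction step
      obtain ⟨t, htcard, hrel⟩ := exists_step s (by omega)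
      rw [hcard] at htcard hrel
      have htc : Multiset.card t = N - 1 := by omega
      have tN := IH (N - 1) (by omega) t htc j
      set Ej := s.esymm j; set Ej1 := s.esymm (j + 1); set Ej2 := s.esymm (j + 2)
      set Tj := t.esymm j; set Tj1 := t.esymm (j + 1); set Tj2 := t.esymm (j + 2)
      set q0 : ℝ := (N.choose j : ℝ); set q1 : ℝ := (N.choose (j + 1) : ℝ)
      set q2 : ℝ := (N.choose (j + 2) : ℝ)
      set r0 : ℝ := ((N - 1).choose j : ℝ); set r1 : ℝ := ((N - 1).choose (j + 1) : ℝ)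
      set r2 : ℝ := ((N - 1).choose (j + 2) : ℝ)
      set d0 : ℝ := ((N - j : ℕ) : ℝ); set d1 : ℝ := ((N - (j + 1) : ℕ) : ℝ)
      set d2 : ℝ := ((N - (j + 2) : ℕ) : ℝ)
      have f0 : (N : ℝ) * Tj = d0 * Ej := hrel j (by omega)
      have f1 : (N : ℝ) * Tj1 = d1 * Ej1 := hrel (j + 1) (by omega)
      have f2 : (N : ℝ) * Tj2 = d2 * Ej2 := hrel (j + 2) (by omega)
      have gq : ∀ i : ℕ, i ≤ N → (N.choose i : ℝ) * ((N - i : ℕ) : ℝ) =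
          (N : ℝ) * ((N - 1).choose i : ℝ) := by
        intro i hi
        have h := Nat.choose_mul_succ_eq (N - 1) i
        rw [show N - 1 + 1 = N from by omega] at h
        have h2 := congrArg (fun x : ℕ => (x : ℝ)) h.symm
        push_cast at h2
        linarith
      have g0 : q0 * d0 = (N : ℝ) * r0 := gq j (by omega)
      have g1 : q1 * d1 = (N : ℝ) * r1 := gq (j + 1) (by omega)
      have g2 : q2 * d2 = (N : ℝ) * r2 := gq (j + 2) (by omega)
      have hd0 : (0:ℝ) < d0 := Nat.cast_pos.mpr (by omega)
      have hd1 : (0:ℝ) < d1 := Nat.cast_pos.mpr (by omega)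
      have hd2 : (0:ℝ) < d2 := Nat.cast_pos.mpr (by omega)
      have h4 : (N:ℝ)^2 * (Tj * Tj2 * r1^2) = d0 * d2 * (Ej * Ej2) * r1^2 := by
        linear_combination (r1^2 * (N:ℝ) * Tj2) * f0 + (r1^2 * d0 * Ej) * f2
      have h5 : (N:ℝ)^2 * (Tj1^2 * (r0 * r2)) = d1^2 * Ej1^2 * (r0 * r2) := by
        linear_combination (r0 * r2 * ((N:ℝ) * Tj1 + d1 * Ej1)) * f1
      have star : d0 * d2 * (Ej * Ej2) * r1^2 ≤ d1^2 * Ej1^2 * (r0 * r2) := by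
        calc d0 * d2 * (Ej * Ej2) * r1^2 = (N:ℝ)^2 * (Tj * Tj2 * r1^2) := h4.symm
          _ ≤ (N:ℝ)^2 * (Tj1^2 * (r0 * r2)) := by
              exact mul_le_mul_of_nonneg_left tN (sq_nonneg _)
          _ = d1^2 * Ej1^2 * (r0 * r2) := h5
      have hpos : (0:ℝ) < d0 * d1^2 * d2 := by positivity
      apply le_of_mul_le_mul_right ?_ hpos
      calc Ej * Ej2 * q1 ^ 2 * (d0 * d1^2 * d2)
          = (d0 * d2 * (Ej * Ej2) * r1^2) * (N:ℝ)^2 := by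
            linear_combination (Ej * Ej2 * d0 * d2 * (q1 * d1 + (N:ℝ) * r1)) * g1
        _ ≤ (d1^2 * Ej1^2 * (r0 * r2)) * (N:ℝ)^2 := mul_le_mul_of_nonneg_right star (sq_nonneg _)
        _ = Ej1 ^ 2 * (q0 * q2) * (d0 * d1^2 * d2) := by
            linear_combination (-(Ej1^2 * d1^2 * q0 * d0)) * g2 + (-(Ej1^2 * d1^2 * (N:ℝ) * r2)) * g0


lemma restrict : ∀ (k : ℕ) (a : ℝ) (u : Multiset ℝ),
    (∀ j, 1 ≤ j → j ≤ k → 0 ≤ (a ::ₘ u).esymm j) →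
    ∀ j, j + 1 ≤ k → 0 ≤ u.esymm j := by
  intro k
  induction k with
  | zero => intro a u h j hj; omega
  | succ k IH =>
    intro a u h j hj
    rcases Nat.lt_or_ge (j + 1) (k + 1) with hlt | hge
    · exact IH a u (fun i hi1 hi2 => h i hi1 (by omega)) j (by omega)
    · -- j = k
      have hj' : j = k := by omega
      subst hj'
      rcases Nat.eq_zero_or_pos j with hj0 | hj0
      · subst hj0; rw [esymm_zero']; norm_num
      obtain ⟨m, rfl⟩ : ∃ m, j = m + 1 := ⟨j - 1, by omega⟩
      by_contra hneg
      push_neg at hneg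
      have hEm : 0 ≤ u.esymm m := IH a u (fun i hi1 hi2 => h i hi1 (by omega)) m (by omega)
      have h1 : 0 ≤ u.esymm (m + 1) + a * u.esymm m := by
        have := h (m + 1) (by omega) (by omega)
        rwa [esymm_cons] at this
      have h2 : 0 ≤ u.esymm (m + 2) + a * u.esymm (m + 1) := by
        have := h (m + 2) (by omega) (by omega)
        rwa [esymm_cons] at this
      set M := Multiset.card u with hM
      rcases Nat.lt_or_ge M (m + 1) with hMm | hMm
      · exact absurd (esymm_eq_zero u (m + 1) hMm) (by intro hz; rw [hz] at hneg; linarith)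
      have key : u.esymm (m + 1) ^ 2 ≤ u.esymm m * u.esymm (m + 2) := by
        nlinarith [mul_nonneg h1 (by linarith : (0:ℝ) ≤ -u.esymm (m + 1)), mul_nonneg hEm h2]
      have nt := newton M u hM.symm m
      have chain : u.esymm (m + 1) ^ 2 * ((M.choose (m + 1) : ℝ)) ^ 2 ≤
          u.esymm (m + 1) ^ 2 * ((M.choose m : ℝ) * (M.choose (m + 2) : ℝ)) := by
        calc u.esymm (m + 1) ^ 2 * ((M.choose (m + 1) : ℝ)) ^ 2
            ≤ u.esymm m * u.esymm (m + 2) * ((M.choose (m + 1) : ℝ)) ^ 2 :=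
              mul_le_mul_of_nonneg_right key (sq_nonneg _)
          _ ≤ _ := nt
      have natlt := choose_strict M m hMm
      have castlt : (M.choose m : ℝ) * (M.choose (m + 2) : ℝ) < ((M.choose (m + 1) : ℝ)) ^ 2 := by
        exact_mod_cast natlt
      have hsq : 0 < u.esymm (m + 1) ^ 2 := by nlinarith [hneg]
      nlinarith [chain, mul_lt_mul_of_pos_left castlt hsq]


end Stmt6Aux

namespace Stmt6Aux

lemma bridge (n k : ℕ) (l : Fin n → ℝ) :
    esymmS n k l = ((Finset.univ.val.map l)).esymm k :=
  (Finset.esymm_map_val l Finset.univ k).symm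

lemma val_decomp (n : ℕ) (l : Fin n → ℝ) (m : Fin n) :
    Finset.univ.val.map l = l m ::ₘ ((Finset.univ.erase m).val.map l) := by
  have h : (Finset.univ : Finset (Fin n)).val = m ::ₘ (Finset.univ.erase m).val := by
    rw [Finset.erase_val]
    exact (Multiset.cons_erase (by simp : m ∈ (Finset.univ : Finset (Fin n)).val)).symm
  rw [h, Multiset.map_cons]

lemma single_step (n kk : ℕ) (l : Fin n → ℝ) (m : Fin n) (t : ℝ) (ht : 0 ≤ t)
    (hl : ∀ j, 1 ≤ j → j ≤ kk → 0 ≤ esymmS n j l) :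
    ∀ j, 1 ≤ j → j ≤ kk → esymmS n j l ≤ esymmS n j (Function.update l m (l m + t)) := by
  intro j hj1 hj2
  obtain ⟨i, rfl⟩ : ∃ i, j = i + 1 := ⟨j - 1, by omega⟩
  set B := ((Finset.univ.erase m).val.map l) with hB
  have hdec : Finset.univ.val.map l = l m ::ₘ B := val_decomp n l m
  have hdec2 : Finset.univ.val.map (Function.update l m (l m + t)) = (l m + t) ::ₘ B := by
    rw [val_decomp n _ m, Function.update_self]
    congr 1
    rw [hB]
    apply Multiset.map_congr rfl
    intro x hx
    exact Function.update_of_ne (Finset.mem_erase.1 (Finset.mem_val.mp hx)).1 _ _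
  have hBnn : 0 ≤ B.esymm i := by
    apply restrict (i + 1) (l m) B _ i (le_refl _)
    intro jj hj1' hj2'
    rw [← hdec, ← bridge]
    exact hl jj hj1' (by omega)
  rw [bridge, bridge, hdec, hdec2, esymm_cons, esymm_cons]
  nlinarith [hBnn, ht]

end Stmt6Aux

/-- Monotonicity of S_k on Γ_k: if λ ∈ Γ_k and η ≥ 0 then 0 ≤ S_k(λ) ≤ S_k(λ+η). -/
theorem stmt6 (n k : ℕ) (hk1 : 1 ≤ k) (hkn : k ≤ n) (lam eta : Fin n → ℝ)
    (hlam : ∀ j, 1 ≤ j → j ≤ k → 0 ≤ esymmS n j lam) (heta : ∀ i, 0 ≤ eta i) :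
    0 ≤ esymmS n k lam ∧ esymmS n k lam ≤ esymmS n k (lam + eta) := by
  refine ⟨hlam k hk1 le_rfl, ?_⟩
  have main : ∀ F : Finset (Fin n), ∀ j, 1 ≤ j → j ≤ k →
      esymmS n j lam ≤ esymmS n j (lam + fun i => if i ∈ F then eta i else 0) := by
    intro F
    induction F using Finset.induction_on with
    | empty =>
      intro j h1 h2
      have heq : (lam + fun i => if i ∈ (∅ : Finset (Fin n)) then eta i else 0) = lam := by
        funext i; simp
      rw [heq]
    | @insert a F ha IH =>
      intro j h1 h2
      set g : Fin n → ℝ := lam + fun i => if i ∈ F then eta i else 0 with hg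
      have hupdate : (lam + fun i => if i ∈ insert a F then eta i else 0)
          = Function.update g a (g a + eta a) := by
        funext i
        by_cases hia : i = a
        · subst hia
          simp [hg, Function.update_self, ha]
        · simp [hg, Function.update_of_ne hia, Finset.mem_insert, hia]
      have hgGamma : ∀ j, 1 ≤ j → j ≤ k → 0 ≤ esymmS n j g :=
        fun j h1 h2 => le_trans (hlam j h1 h2) (IH j h1 h2)
      rw [hupdate]
      exact le_trans (IH j h1 h2)
        (Stmt6Aux.single_step n k g a (eta a) (heta a) hgGamma j h1 h2)
  have hfinal := main Finset.univ k hk1 le_rfl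
  have heq : (lam + fun i => if i ∈ (Finset.univ : Finset (Fin n)) then eta i else 0)
      = lam + eta := by
    funext i; simp
  rwa [heq] at hfinal
end

section
/- If λ ∈ Γ_k, then for each index i = 1,...,n one has S_{k-1}(λ)|_{λ_i = 0} ≥ 0; that is, all partial derivatives of S_k are nonnegative on the cone Γ_k. -/
open Finset Polynomial

namespace Stmt7Aux

variable {n : ℕ}

noncomputable def eOn (s : Finset (Fin n)) (m : ℕ) (v : Fin n → ℝ) : ℝ :=
  ∑ A ∈ s.powersetCard m, ∏ j ∈ A, v j

lemma eOn_zero (s : Finset (Fin n)) (v : Fin n → ℝ) : eOn s 0 v = 1 := by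
  simp [eOn]

lemma esymmS_eq_eOn (m : ℕ) (v : Fin n → ℝ) : esymmS n m v = eOn univ m v := rfl

lemma esymmS_update (m : ℕ) (v : Fin n → ℝ) (i : Fin n) :
    esymmS n m (Function.update v i 0) = eOn (univ.erase i) m v := by
  unfold esymmS eOn
  rw [← Finset.sum_filter_add_sum_filter_not (Finset.powersetCard m Finset.univ)
    (fun A => i ∈ A)]
  have h1 : ∑ A ∈ (Finset.powersetCard m Finset.univ).filter (fun A => i ∈ A),
      ∏ j ∈ A, Function.update v i 0 j = 0 := by
    apply Finset.sum_eq_zero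
    intro A hA
    rw [Finset.mem_filter] at hA
    exact Finset.prod_eq_zero hA.2 (by simp)
  have h2 : (Finset.powersetCard m Finset.univ).filter (fun A => i ∉ A)
      = (Finset.univ.erase i).powersetCard m := by
    ext A
    simp only [Finset.mem_filter, Finset.mem_powersetCard, Finset.subset_univ, true_and,
      Finset.subset_erase]
    tauto
  rw [h1, zero_add, h2]
  apply Finset.sum_congr rfl
  intro A hA
  apply Finset.prod_congr rfl
  intro j hj
  rw [Finset.mem_powersetCard, Finset.subset_erase] at hA
  have : j ≠ i := by rintro rfl; exact hA.1.2 hj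
  simp [Function.update_of_ne this]
lemma esymmS_split (m : ℕ) (v : Fin n → ℝ) (i : Fin n) :
    esymmS n (m+1) v = eOn (univ.erase i) (m+1) v + v i * eOn (univ.erase i) m v := by
  unfold esymmS eOn
  rw [← Finset.sum_filter_add_sum_filter_not (Finset.powersetCard (m+1) Finset.univ)
    (fun A => i ∉ A)]
  congr 1
  · -- A's not containing i
    apply Finset.sum_congr
    · ext A
      simp only [Finset.mem_filter, Finset.mem_powersetCard, Finset.subset_univ, true_and,
        Finset.subset_erase]
      tauto
    · intro A _; rfl
  · -- A's containing i
    rw [Finset.mul_sum]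
    apply Finset.sum_nbij' (fun A => A.erase i) (fun D => insert i D)
    · intro A hA
      simp only [Finset.mem_filter, Finset.mem_powersetCard, not_not] at hA
      rw [Finset.mem_powersetCard]
      constructor
      · exact Finset.erase_subset_erase i (Finset.subset_univ A)
      · rw [Finset.card_erase_of_mem hA.2, hA.1.2]; rfl
    · intro D hD
      rw [Finset.mem_powersetCard, Finset.subset_erase] at hD
      simp only [Finset.mem_filter, Finset.mem_powersetCard, not_not]
      refine ⟨⟨Finset.subset_univ _, ?_⟩, Finset.mem_insert_self i D⟩
      rw [Finset.card_insert_of_notMem hD.1.2, hD.2]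
    · intro A hA
      simp only [Finset.mem_filter, not_not] at hA
      exact Finset.insert_erase hA.2
    · intro D hD
      rw [Finset.mem_powersetCard, Finset.subset_erase] at hD
      exact Finset.erase_insert hD.1.2
    · intro A hA
      simp only [Finset.mem_filter, not_not] at hA
      exact (Finset.mul_prod_erase A v hA.2).symm
lemma count_supersets (s B : Finset (Fin n)) (m : ℕ) (hB : B ⊆ s) (hBm : B.card ≤ m) :
    ((s.powersetCard m).filter (fun A => B ⊆ A)).card = (s.card - B.card).choose (m - B.card) := by
  have : ((s.powersetCard m).filter (fun A => B ⊆ A)).card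
      = ((s \ B).powersetCard (m - B.card)).card := by
    apply Finset.card_nbij' (fun A => A \ B) (fun D => D ∪ B)
    · intro A hA
      rw [Finset.mem_coe, Finset.mem_filter, Finset.mem_powersetCard] at hA
      rw [Finset.mem_coe, Finset.mem_powersetCard]
      exact ⟨Finset.sdiff_subset_sdiff hA.1.1 (le_refl B),
        by rw [Finset.card_sdiff_of_subset hA.2, hA.1.2]⟩
    · intro D hD
      rw [Finset.mem_coe, Finset.mem_powersetCard] at hD
      have hdisj : Disjoint D B := Finset.disjoint_of_subset_left hD.1 (Finset.sdiff_disjoint)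
      rw [Finset.mem_coe, Finset.mem_filter, Finset.mem_powersetCard]
      refine ⟨⟨Finset.union_subset (hD.1.trans Finset.sdiff_subset) hB, ?_⟩,
        Finset.subset_union_right⟩
      rw [Finset.card_union_of_disjoint hdisj, hD.2]
      omega
    · intro A hA
      rw [Finset.mem_coe, Finset.mem_filter] at hA
      exact Finset.sdiff_union_of_subset hA.2
    · intro D hD
      rw [Finset.mem_coe, Finset.mem_powersetCard] at hD
      have hdisj : Disjoint D B := Finset.disjoint_of_subset_left hD.1 (Finset.sdiff_disjoint)
      exact Finset.union_sdiff_cancel_right hdisj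
  rw [this, Finset.card_powersetCard, Finset.card_sdiff_of_subset hB]
lemma count_supersets_zero (s B : Finset (Fin n)) (m : ℕ) (hBm : m < B.card) :
    ((s.powersetCard m).filter (fun A => B ⊆ A)) = ∅ := by
  rw [Finset.filter_eq_empty_iff]
  intro A hA
  rw [Finset.mem_powersetCard] at hA
  intro hBA
  have := Finset.card_le_card hBA
  omega
lemma eOn_shift (s : Finset (Fin n)) (m : ℕ) (hm : m ≤ s.card) (v : Fin n → ℝ) (t : ℝ) :
    eOn s m (fun j => v j + t)
      = ∑ p ∈ Finset.range (m+1),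
          eOn s p v * ((s.card - p).choose (m - p) : ℝ) * t^(m-p) := by
  unfold eOn
  have step1 : ∀ A ∈ s.powersetCard m,
      (∏ j ∈ A, (v j + t)) = ∑ B ∈ A.powerset, (∏ j ∈ B, v j) * t^(m - B.card) := by
    intro A hA
    rw [Finset.mem_powersetCard] at hA
    rw [Finset.prod_add]
    apply Finset.sum_congr rfl
    intro B hB
    rw [Finset.mem_powerset] at hB
    rw [Finset.prod_const, Finset.card_sdiff_of_subset hB, hA.2]
  rw [Finset.sum_congr rfl step1]
  rw [Finset.sum_comm' (t' := s.powerset)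
    (s' := fun B => (s.powersetCard m).filter (fun A => B ⊆ A))
    (by
      intro A B
      simp only [Finset.mem_filter, Finset.mem_powerset, Finset.mem_powersetCard]
      constructor
      · rintro ⟨⟨hAs, hAc⟩, hBA⟩
        exact ⟨⟨⟨hAs, hAc⟩, hBA⟩, hBA.trans hAs⟩
      · rintro ⟨⟨h1, h2⟩, _⟩
        exact ⟨h1, h2⟩)]
  have step2 : ∀ B ∈ s.powerset,
      (∑ _A ∈ (s.powersetCard m).filter (fun A => B ⊆ A), (∏ j ∈ B, v j) * t^(m - B.card))
      = (((s.powersetCard m).filter (fun A => B ⊆ A)).card : ℝ)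
          * ((∏ j ∈ B, v j) * t^(m - B.card)) := by
    intro B _
    rw [Finset.sum_const, nsmul_eq_mul]
  rw [Finset.sum_congr rfl step2]
  rw [← Finset.sum_fiberwise_of_maps_to (g := fun B : Finset (Fin n) => B.card)
    (t := Finset.range (s.card + 1))
    (fun B hB => by
      rw [Finset.mem_range, Nat.lt_succ_iff]
      exact Finset.card_le_card (Finset.mem_powerset.mp hB))]
  have step3 : ∀ p ∈ Finset.range (s.card + 1),
      (∑ B ∈ s.powerset with B.card = p,
        (((s.powersetCard m).filter (fun A => B ⊆ A)).card : ℝ)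
          * ((∏ j ∈ B, v j) * t^(m - B.card)))
      = (if p ≤ m then
          (∑ B ∈ s.powersetCard p, ∏ j ∈ B, v j) * ((s.card - p).choose (m - p) : ℝ) * t^(m-p)
        else 0) := by
    intro p _
    have hfib : s.powerset.filter (fun B => B.card = p) = s.powersetCard p :=
      (Finset.powersetCard_eq_filter).symm
    rw [hfib]
    by_cases hpm : p ≤ m
    · rw [if_pos hpm, Finset.sum_mul, Finset.sum_mul]
      apply Finset.sum_congr rfl
      intro B hB
      rw [Finset.mem_powersetCard] at hB
      rw [count_supersets s B m hB.1 (hB.2 ▸ hpm), hB.2]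
      ring
    · rw [if_neg hpm]
      apply Finset.sum_eq_zero
      intro B hB
      rw [Finset.mem_powersetCard] at hB
      rw [count_supersets_zero s B m (by omega)]
      simp
  rw [Finset.sum_congr rfl step3, Finset.sum_ite, Finset.sum_const_zero, add_zero]
  have hfilt : (Finset.range (s.card+1)).filter (fun p => p ≤ m) = Finset.range (m+1) := by
    ext p
    simp only [Finset.mem_filter, Finset.mem_range]
    omega
  rw [hfilt]
lemma laguerre (a : ℝ) (M : Multiset ℝ) (x : ℝ) :
    eval x (derivative (derivative (C a * (M.map (fun r => X - C r)).prod))) *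
      eval x (C a * (M.map (fun r => X - C r)).prod) ≤
    (eval x (derivative (C a * (M.map (fun r => X - C r)).prod)))^2 := by
  induction M using Multiset.induction_on with
  | empty => simp
  | cons r M ih =>
    have hq : C a * ((r ::ₘ M).map (fun r => X - C r)).prod
        = (X - C r) * (C a * (M.map (fun r => X - C r)).prod) := by
      rw [Multiset.map_cons, Multiset.prod_cons]; ring
    set p := C a * (M.map (fun r => X - C r)).prod with hp
    rw [hq]
    have hd1 : derivative ((X - C r) * p) = p + (X - C r) * derivative p := by
      rw [derivative_mul]; simp
    have hd2 : derivative (p + (X - C r) * derivative p)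
        = 2 * derivative p + (X - C r) * derivative (derivative p) := by
      rw [derivative_add, derivative_mul]
      simp
      ring
    rw [hd1, hd2]
    simp only [eval_add, eval_mul, eval_sub, eval_X, eval_C, eval_ofNat]
    nlinarith [mul_le_mul_of_nonneg_left ih (sq_nonneg (x - r)), sq_nonneg (eval x p)]
lemma splits_derivative {p : ℝ[X]} (hp : p.Splits) :
    (derivative p).Splits := by
  rw [splits_iff_card_roots] at hp ⊢
  have h1 := p.card_roots_le_derivative
  have h2 := (derivative p).card_roots'
  have h3 := p.natDegree_derivative_le
  omega
lemma splits_iterate_derivative {p : ℝ[X]} (hp : p.Splits) (m : ℕ) :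
    (derivative^[m] p).Splits := by
  induction m with
  | zero => exact hp
  | succ m ih => rw [Function.iterate_succ_apply']; exact splits_derivative ih
lemma newton_zero {n k : ℕ} (hk2 : 2 ≤ k) (hkn : k ≤ n) (w : Fin n → ℝ)
    (h1 : esymmS n (k-1) w = 0) (h2 : 0 < esymmS n (k-2) w) :
    esymmS n k w ≤ 0 := by
  set P : ℝ[X] := ∏ j : Fin n, (X + C (w j)) with hP
  have hsplit : P.Splits := by
    apply Splits.prod
    intro j _
    have h : (X : ℝ[X]) - C (-(w j)) = X + C (w j) := by rw [map_neg, sub_neg_eq_add]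
    rw [← h]
    exact Splits.X_sub_C _
  have hcard : (Finset.univ : Finset (Fin n)).card = n := by simp
  have hcoeff : ∀ j, j ≤ n → P.coeff j = esymmS n (n - j) w := by
    intro j hj
    rw [hP, Finset.prod_X_add_C_coeff _ _ (by rw [hcard]; exact hj)]
    rw [esymmS, hcard]
  set Q := derivative^[n-k] P with hQ
  have hQsplit : Q.Splits := splits_iterate_derivative hsplit _
  have hQeq := hQsplit.eq_prod_roots
  have key := laguerre Q.leadingCoeff Q.roots 0
  rw [← hQeq] at key
  -- coefficients of Q
  have c0 : Q.coeff 0 = ((0 + (n-k)).descFactorial (n-k) : ℝ) * esymmS n k w := by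
    have h : n - (0 + (n-k)) = k := by omega
    rw [hQ, coeff_iterate_derivative, hcoeff _ (by omega), h, nsmul_eq_mul]
  have c1 : Q.coeff 1 = ((1 + (n-k)).descFactorial (n-k) : ℝ) * esymmS n (k-1) w := by
    have h : n - (1 + (n-k)) = k - 1 := by omega
    rw [hQ, coeff_iterate_derivative, hcoeff _ (by omega), h, nsmul_eq_mul]
  have c2 : Q.coeff 2 = ((2 + (n-k)).descFactorial (n-k) : ℝ) * esymmS n (k-2) w := by
    have h : n - (2 + (n-k)) = k - 2 := by omega
    rw [hQ, coeff_iterate_derivative, hcoeff _ (by omega), h, nsmul_eq_mul]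
  -- evaluations at 0
  have e0 : eval 0 Q = Q.coeff 0 := (coeff_zero_eq_eval_zero Q).symm
  have e1 : eval 0 (derivative Q) = Q.coeff 1 := by
    rw [← coeff_zero_eq_eval_zero, coeff_derivative]
    push_cast
    ring
  have e2 : eval 0 (derivative (derivative Q)) = 2 * Q.coeff 2 := by
    rw [← coeff_zero_eq_eval_zero, coeff_derivative, coeff_derivative]
    push_cast
    ring
  rw [e0, e1, e2, c0, c1, c2, h1] at key
  have d0 : (0:ℝ) < ((0 + (n-k)).descFactorial (n-k) : ℝ) := by
    have : 0 < (0 + (n-k)).descFactorial (n-k) :=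
      Nat.pos_of_ne_zero (by rw [Ne, Nat.descFactorial_eq_zero_iff_lt]; omega)
    exact_mod_cast this
  have d2 : (0:ℝ) < ((2 + (n-k)).descFactorial (n-k) : ℝ) := by
    have : 0 < (2 + (n-k)).descFactorial (n-k) :=
      Nat.pos_of_ne_zero (by rw [Ne, Nat.descFactorial_eq_zero_iff_lt]; omega)
    exact_mod_cast this
  nlinarith [mul_pos d2 h2, mul_pos d0 (mul_pos d2 h2)]
lemma main_aux {n : ℕ} : ∀ k, 1 ≤ k → k ≤ n → ∀ lam : Fin n → ℝ,
    (∀ j, 1 ≤ j → j ≤ k → 0 ≤ esymmS n j lam) →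
    ∀ i : Fin n, 0 ≤ esymmS n (k-1) (Function.update lam i 0) := by
  intro k
  induction k using Nat.strong_induction_on with
  | _ k IH =>
    intro hk1 hkn lam hlam i
    rcases k with _ | _ | m
    · omega
    · -- k = 1
      simp [esymmS]
    · -- k = m + 2
      show 0 ≤ esymmS n (m+1) (Function.update lam i 0)
      have hcard_univ : (Finset.univ : Finset (Fin n)).card = n := by simp
      have hcard_erase : (Finset.univ.erase i).card = n - 1 := by
        rw [Finset.card_erase_of_mem (Finset.mem_univ i), hcard_univ]
      have hIH : ∀ p, p ≤ m → 0 ≤ eOn (Finset.univ.erase i) p lam := by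
        intro p hp
        have := IH (p+1) (by omega) (by omega) (by omega) lam
          (fun j hj1 hj2 => hlam j hj1 (by omega)) i
        rwa [show p + 1 - 1 = p from rfl, esymmS_update] at this
      by_contra hc
      push_neg at hc
      rw [esymmS_update] at hc
      set c : ℝ := eOn (Finset.univ.erase i) (m+1) lam with hcdef
      -- the function G
      set G : ℝ → ℝ := fun t => eOn (Finset.univ.erase i) (m+1) (fun j => lam j + t) with hGdef
      have hGexp : ∀ t : ℝ, G t = ∑ p ∈ Finset.range (m+2),
          eOn (Finset.univ.erase i) p lam * (((n-1) - p).choose (m+1-p) : ℝ) * t^(m+1-p) := by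
        intro t
        show eOn (Finset.univ.erase i) (m+1) (fun j => lam j + t) = _
        rw [eOn_shift (Finset.univ.erase i) (m+1) (by rw [hcard_erase]; omega) lam t, hcard_erase]
      have hG0 : G 0 = c := by
        show eOn (Finset.univ.erase i) (m+1) (fun j => lam j + 0) = c
        simp only [add_zero]
        rfl
      have hGcont : Continuous G := by
        show Continuous fun t => eOn (Finset.univ.erase i) (m+1) fun j => lam j + t
        unfold eOn
        apply continuous_finset_sum
        intro A _
        apply continuous_finset_prod
        intro j _
        exact (continuous_const.add continuous_id)
      -- G is eventually positive
      set T : ℝ := 1 - c with hTdef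
      have hT1 : (1:ℝ) ≤ T := by rw [hTdef]; linarith
      have hGT : 0 < G T := by
        rw [hGexp T, Finset.sum_range_succ]
        have hlast : eOn (Finset.univ.erase i) (m+1) lam
            * (((n-1) - (m+1)).choose (m+1-(m+1)) : ℝ) * T^(m+1-(m+1)) = c := by
          rw [Nat.sub_self]
          simp
          rfl
        rw [hlast]
        have hterms : ∀ p ∈ Finset.range (m+1),
            (0:ℝ) ≤ eOn (Finset.univ.erase i) p lam * (((n-1) - p).choose (m+1-p) : ℝ)
              * T^(m+1-p) := by
          intro p hp
          rw [Finset.mem_range] at hp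
          have h1 := hIH p (by omega)
          have h2 : (0:ℝ) ≤ (((n-1) - p).choose (m+1-p) : ℝ) := by positivity
          have h3 : (0:ℝ) ≤ T^(m+1-p) := by positivity
          positivity
        have hfirst : (T:ℝ) ≤ eOn (Finset.univ.erase i) 0 lam
            * (((n-1) - 0).choose (m+1-0) : ℝ) * T^(m+1-0) := by
          rw [eOn_zero, one_mul]
          simp only [Nat.sub_zero]
          have hch : (1:ℝ) ≤ (((n-1)).choose (m+1) : ℝ) := by
            have : 0 < (n-1).choose (m+1) := Nat.choose_pos (by omega)
            exact_mod_cast this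
          have hTpow : T ≤ T^(m+1) := le_self_pow₀ (by linarith) (by omega)
          nlinarith [pow_pos (show (0:ℝ) < T by linarith) (m+1)]
        have hsum := Finset.single_le_sum hterms (show (0:ℕ) ∈ Finset.range (m+1) by simp)
        calc (0:ℝ) < T + c := by rw [hTdef]; ring_nf; norm_num
          _ ≤ _ := by
              have := le_trans hfirst hsum
              linarith
      -- IVT
      have hmem : (0:ℝ) ∈ Set.Icc (G 0) (G T) := ⟨by rw [hG0]; linarith, le_of_lt hGT⟩
      obtain ⟨t1, ht1mem, ht1⟩ :=
        intermediate_value_Icc (by linarith : (0:ℝ) ≤ T) hGcont.continuousOn hmem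
      have ht1pos : 0 < t1 := by
        rcases eq_or_lt_of_le ht1mem.1 with h | h
        · exfalso; rw [← h, hG0] at ht1; linarith
        · exact h
      -- the contradiction vector
      set v : Fin n → ℝ := fun j => lam j + t1 with hvdef
      set ν : Fin n → ℝ := Function.update v i 0 with hνdef
      have hν1 : esymmS n (m+1) ν = 0 := by
        rw [hνdef, esymmS_update]
        exact ht1
      have hν2 : 0 < esymmS n m ν := by
        rw [hνdef, esymmS_update, hvdef]
        show (0:ℝ) < eOn (Finset.univ.erase i) m (fun j => lam j + t1)
        rw [eOn_shift (Finset.univ.erase i) m (by rw [hcard_erase]; omega) lam t1, hcard_erase]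
        have hterms : ∀ p ∈ Finset.range (m+1),
            (0:ℝ) ≤ eOn (Finset.univ.erase i) p lam * (((n-1) - p).choose (m-p) : ℝ)
              * t1^(m-p) := by
          intro p hp
          rw [Finset.mem_range] at hp
          have h1 := hIH p (by omega)
          positivity
        have hfirst : (0:ℝ) < eOn (Finset.univ.erase i) 0 lam
            * (((n-1) - 0).choose (m-0) : ℝ) * t1^(m-0) := by
          rw [eOn_zero, one_mul]
          have hch : 0 < (n-1).choose m := Nat.choose_pos (by omega)
          have : (0:ℝ) < ((n-1).choose m : ℝ) := by exact_mod_cast hch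
          positivity
        have hsum := Finset.single_le_sum hterms (show (0:ℕ) ∈ Finset.range (m+1) by simp)
        calc (0:ℝ) < eOn (Finset.univ.erase i) 0 lam
              * (((n-1) - 0).choose (m-0) : ℝ) * t1^(m-0) := hfirst
          _ ≤ _ := hsum
      have hν3 : 0 < esymmS n (m+2) ν := by
        have hsplit := esymmS_split (m+1) v i
        have hupd := esymmS_update (m+2) v i
        have hGt1 : eOn (Finset.univ.erase i) (m+1) v = 0 := ht1
        have hbig : 0 < esymmS n (m+2) v := by
          rw [esymmS_eq_eOn, hvdef]
          show (0:ℝ) < eOn Finset.univ (m+2) (fun j => lam j + t1)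
          rw [eOn_shift (Finset.univ : Finset (Fin n)) (m+2) (by rw [hcard_univ]; omega) lam t1, hcard_univ]
          have hterms : ∀ p ∈ Finset.range (m+3),
              (0:ℝ) ≤ eOn Finset.univ p lam * ((n - p).choose (m+2-p) : ℝ) * t1^(m+2-p) := by
            intro p hp
            rw [Finset.mem_range] at hp
            have h1 : 0 ≤ eOn Finset.univ p lam := by
              rcases Nat.eq_zero_or_pos p with rfl | hp0
              · rw [eOn_zero]; norm_num
              · exact hlam p hp0 (by omega)
            positivity
          have hfirst : (0:ℝ) < eOn Finset.univ 0 lam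
              * ((n - 0).choose (m+2-0) : ℝ) * t1^(m+2-0) := by
            rw [eOn_zero, one_mul]
            have hch : 0 < n.choose (m+2) := Nat.choose_pos (by omega)
            have : (0:ℝ) < (n.choose (m+2) : ℝ) := by exact_mod_cast hch
            positivity
          have hsum := Finset.single_le_sum hterms (show (0:ℕ) ∈ Finset.range (m+3) by simp)
          calc (0:ℝ) < eOn Finset.univ 0 lam * ((n - 0).choose (m+2-0) : ℝ) * t1^(m+2-0) :=
                hfirst
            _ ≤ _ := hsum
        rw [hsplit, hGt1, mul_zero, add_zero] at hbig
        rw [hνdef, hupd]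
        exact hbig
      have := newton_zero (n := n) (k := m+2) (by omega) hkn ν hν1 hν2
      linarith

end Stmt7Aux

/-- If λ ∈ Γ_k then S_{k-1}(λ)|_{λ_i=0} ≥ 0 for each i. -/
theorem stmt7 (n k : ℕ) (hk1 : 1 ≤ k) (hkn : k ≤ n) (lam : Fin n → ℝ)
    (hlam : ∀ j, 1 ≤ j → j ≤ k → 0 ≤ esymmS n j lam) :
    ∀ i : Fin n, 0 ≤ esymmS n (k - 1) (Function.update lam i 0) :=
  Stmt7Aux.main_aux k hk1 hkn lam hlam
end
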